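/- arXiv:1703.10136 — 2 statements merged into one kernel-verified Lean document; each statement's English description precedes it below -/
import Mathlib

section
/- Let A be an exchangeable random n×n real matrix and t a natural number. Define the random n×n squared diffusion-distance matrix S_t by S_t(i,j) = (L(A)^{2t})(i,i) + (L(A)^{2t})(j,j) − 2(L(A)^{2t})(i,j), where L(A) is the normalized graph Laplacian of A. Then S_t is exchangeable: for every permutation σ of {1,…,n}, the random matrix S_t^σ with entries S_t^σ(i,j) = S_t(σ(i),σ(j)) has the same distribution as S_t. -/
open scoped BigOperators
open MeasureTheory

/-- The normalized graph Laplacian of an `n × n` real matrix `K`: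
`L(K)(i,j) = K(i,j) / √(rᵢ · cⱼ)` where `rᵢ` is the `i`-th row sum and `cⱼ` the `j`-th
column sum, with the convention that the entry is `0` whenever `rᵢ = 0` or `cⱼ = 0`. -/
noncomputable def normLap {n : ℕ} (K : Matrix (Fin n) (Fin n) ℝ) :
    Matrix (Fin n) (Fin n) ℝ :=
  Matrix.of fun i j =>
    if (∑ l, K i l) = 0 ∨ (∑ l, K l j) = 0 then 0
    else K i j / Real.sqrt ((∑ l, K i l) * (∑ l, K l j))

/-- A random `n × n` real matrix `A` on a probability space `(Ω, P)` is exchangeable if for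
every permutation `σ` of `{1,…,n}` the relabeled random matrix `A^σ(ω)(i,j) = A(ω)(σ(i),σ(j))`
has the same distribution (pushforward of `P`) as `A`. -/
def Exchangeable {Ω : Type*} [MeasurableSpace Ω] {n : ℕ} (P : Measure Ω)
    (A : Ω → Fin n → Fin n → ℝ) : Prop :=
  ∀ σ : Equiv.Perm (Fin n),
    P.map (fun ω => fun i j => A ω (σ i) (σ j)) = P.map A

lemma measurable_normLap_entry {n : ℕ} (i j : Fin n) :
    Measurable (fun K : Fin n → Fin n → ℝ => normLap (Matrix.of K) i j) := by
  have hev : ∀ a b : Fin n, Measurable fun K : Fin n → Fin n → ℝ => K a b :=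
    fun a b => (measurable_pi_apply b).comp (measurable_pi_apply a)
  have hr : Measurable fun K : Fin n → Fin n → ℝ => ∑ l, K i l :=
    Finset.measurable_sum _ fun l _ => hev i l
  have hc : Measurable fun K : Fin n → Fin n → ℝ => ∑ l, K l j :=
    Finset.measurable_sum _ fun l _ => hev l j
  have hset : MeasurableSet {K : Fin n → Fin n → ℝ |
      (∑ l, K i l) = 0 ∨ (∑ l, K l j) = 0} := by
    have : {K : Fin n → Fin n → ℝ | (∑ l, K i l) = 0 ∨ (∑ l, K l j) = 0}
        = ((fun K : Fin n → Fin n → ℝ => ∑ l, K i l) ⁻¹' {0})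
          ∪ ((fun K : Fin n → Fin n → ℝ => ∑ l, K l j) ⁻¹' {0}) := rfl
    rw [this]
    exact (hr (measurableSet_singleton 0)).union (hc (measurableSet_singleton 0))
  have hdiv : Measurable fun K : Fin n → Fin n → ℝ =>
      K i j / Real.sqrt ((∑ l, K i l) * (∑ l, K l j)) :=
    (hev i j).div (Real.continuous_sqrt.measurable.comp (hr.mul hc))
  simp only [normLap, Matrix.of_apply]
  exact Measurable.ite hset measurable_const hdiv

lemma measurable_normLap_pow_entry {n : ℕ} (m : ℕ) (i j : Fin n) :
    Measurable (fun K : Fin n → Fin n → ℝ => (normLap (Matrix.of K) ^ m) i j) := by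
  induction m generalizing i j with
  | zero =>
    simp only [pow_zero, Matrix.one_apply]
    exact measurable_const
  | succ m ih =>
    have : (fun K : Fin n → Fin n → ℝ => (normLap (Matrix.of K) ^ (m + 1)) i j)
        = fun K => ∑ l, (normLap (Matrix.of K) ^ m) i l * normLap (Matrix.of K) l j := by
      funext K; rw [pow_succ, Matrix.mul_apply]
    rw [this]
    exact Finset.measurable_sum _ fun l _ => (ih i l).mul (measurable_normLap_entry l j)

lemma normLap_submatrix {n : ℕ} (K : Matrix (Fin n) (Fin n) ℝ) (σ : Equiv.Perm (Fin n)) :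
    normLap (K.submatrix σ σ) = (normLap K).submatrix σ σ := by
  ext i j
  have hr : ∑ x, K (σ i) (σ x) = ∑ l, K (σ i) l :=
    Fintype.sum_equiv σ _ _ fun l => rfl
  have hc : ∑ x, K (σ x) (σ j) = ∑ l, K l (σ j) :=
    Fintype.sum_equiv σ _ _ fun l => rfl
  simp [normLap, Matrix.submatrix_apply, hr, hc]

lemma submatrix_pow_perm {n : ℕ} (K : Matrix (Fin n) (Fin n) ℝ) (σ : Equiv.Perm (Fin n))
    (m : ℕ) : (K.submatrix σ σ) ^ m = (K ^ m).submatrix σ σ := by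
  induction m with
  | zero =>
    ext i j
    simp [Matrix.one_apply, EmbeddingLike.apply_eq_iff_eq]
  | succ m ih =>
    rw [pow_succ, pow_succ, ih]
    ext i j
    rw [Matrix.mul_apply, Matrix.submatrix_apply, Matrix.mul_apply]
    exact Fintype.sum_equiv σ _ _ fun l => rfl

/-- Let `A` be an exchangeable random `n × n` real matrix and `t` a natural number.  The
random squared diffusion-distance matrix
`Sₜ(i,j) = (L(A)^{2t})(i,i) + (L(A)^{2t})(j,j) − 2 (L(A)^{2t})(i,j)`,
where `L(A)` is the normalized graph Laplacian of `A`, is exchangeable. -/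
theorem exchangeable_sq_diffusion_distance {Ω : Type*} [MeasurableSpace Ω] {n : ℕ}
    (P : Measure Ω) [IsProbabilityMeasure P]
    (A : Ω → Fin n → Fin n → ℝ) (hA : Measurable A)
    (hexch : Exchangeable P A) (t : ℕ)
    (S : Ω → Fin n → Fin n → ℝ)
    (hS : ∀ ω i j, S ω i j =
      (normLap (Matrix.of (A ω)) ^ (2 * t)) i i
        + (normLap (Matrix.of (A ω)) ^ (2 * t)) j j
        - 2 * (normLap (Matrix.of (A ω)) ^ (2 * t)) i j) :
    Exchangeable P S := by
  intro σ
  set F : (Fin n → Fin n → ℝ) → (Fin n → Fin n → ℝ) := fun K i j =>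
    (normLap (Matrix.of K) ^ (2 * t)) i i
      + (normLap (Matrix.of K) ^ (2 * t)) j j
      - 2 * (normLap (Matrix.of K) ^ (2 * t)) i j with hF
  have hFmeas : Measurable F := by
    apply measurable_pi_lambda
    intro i
    apply measurable_pi_lambda
    intro j
    exact ((measurable_normLap_pow_entry (2 * t) i i).add
      (measurable_normLap_pow_entry (2 * t) j j)).sub
      ((measurable_normLap_pow_entry (2 * t) i j).const_mul 2)
  have hSF : S = F ∘ A := by
    funext ω; funext i; funext j
    simp [hF, Function.comp, hS ω i j]
  have hkey : ∀ ω, (fun i j => S ω (σ i) (σ j)) = F (fun i j => A ω (σ i) (σ j)) := by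
    intro ω
    funext i j
    have hsub : (Matrix.of fun i j => A ω (σ i) (σ j))
        = (Matrix.of (A ω)).submatrix σ σ := rfl
    have hpow : normLap (Matrix.of fun i j => A ω (σ i) (σ j)) ^ (2 * t)
        = ((normLap (Matrix.of (A ω))) ^ (2 * t)).submatrix σ σ := by
      rw [hsub, normLap_submatrix, submatrix_pow_perm]
    simp only [hF, hpow, Matrix.submatrix_apply, hS ω (σ i) (σ j)]
  have hAσ : Measurable (fun ω => fun i j => A ω (σ i) (σ j)) := by
    apply measurable_pi_lambda
    intro i
    apply measurable_pi_lambda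
    intro j
    exact ((measurable_pi_apply (σ j)).comp (measurable_pi_apply (σ i))).comp hA
  calc P.map (fun ω => fun i j => S ω (σ i) (σ j))
      = P.map (F ∘ fun ω => fun i j => A ω (σ i) (σ j)) := by
        congr 1; funext ω; exact hkey ω
    _ = (P.map (fun ω => fun i j => A ω (σ i) (σ j))).map F := by
        rw [Measure.map_map hFmeas hAσ]
    _ = (P.map A).map F := by rw [hexch σ]
    _ = P.map (F ∘ A) := by rw [Measure.map_map hFmeas hA]
    _ = P.map S := by rw [hSF]
end

section
/- For any points U_1,…,U_n ∈ ℝ^q and X_1,…,X_n ∈ ℝ^p, the sample distance covariance is nonnegative: dcov_n(U,X) = (1/n²) Σ_{i,j=1}^n C̃(i,j) D̃(i,j) ≥ 0. -/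
open scoped BigOperators
open Real MeasureTheory Set
open scoped ENNReal
open Matrix

lemma gram_pow_nonneg {n q : ℕ} (r : Fin n → Fin q → ℝ) (w : Fin n → ℝ) (k : ℕ) :
    0 ≤ ∑ i, ∑ j, w i * w j * (∑ a, r i a * r j a) ^ k := by
  have expand : ∀ i j : Fin n, (∑ a, r i a * r j a) ^ k
      = ∑ g : Fin k → Fin q, (∏ l, r i (g l)) * (∏ l, r j (g l)) := by
    intro i j
    have h1 : (∑ a, r i a * r j a) ^ k = ∏ _l : Fin k, (∑ a, r i a * r j a) := by
      simp [Finset.prod_const]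
    rw [h1, Finset.prod_univ_sum]
    exact Finset.sum_congr rfl fun g _ => by rw [← Finset.prod_mul_distrib]
  have key : ∑ i, ∑ j, w i * w j * (∑ a, r i a * r j a) ^ k
      = ∑ g : Fin k → Fin q, (∑ i, w i * ∏ l, r i (g l)) ^ 2 := by
    simp_rw [expand, Finset.mul_sum]
    calc ∑ i, ∑ j, ∑ g : Fin k → Fin q, w i * w j * ((∏ l, r i (g l)) * ∏ l, r j (g l))
        = ∑ i, ∑ g : Fin k → Fin q, ∑ j, w i * w j * ((∏ l, r i (g l)) * ∏ l, r j (g l)) :=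
          Finset.sum_congr rfl fun i _ => Finset.sum_comm
      _ = ∑ g : Fin k → Fin q, ∑ i, ∑ j, w i * w j * ((∏ l, r i (g l)) * ∏ l, r j (g l)) :=
          Finset.sum_comm
      _ = ∑ g : Fin k → Fin q, (∑ i, w i * ∏ l, r i (g l)) ^ 2 := by
          refine Finset.sum_congr rfl fun g _ => ?_
          rw [sq, Finset.sum_mul_sum]
          exact Finset.sum_congr rfl fun i _ => Finset.sum_congr rfl fun j _ => by ring
  rw [key]
  exact Finset.sum_nonneg fun g _ => sq_nonneg _

lemma sum_mul_exp_nonneg {P : Type*} [Fintype P] (a z : P → ℝ)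
    (h : ∀ k : ℕ, 0 ≤ ∑ p, a p * (z p ^ k / (Nat.factorial k : ℝ))) :
    0 ≤ ∑ p, a p * Real.exp (z p) := by
  have hsum : ∀ p : P, Summable (fun k : ℕ => a p * (z p ^ k / (Nat.factorial k : ℝ))) :=
    fun p => (Real.summable_pow_div_factorial (z p)).mul_left _
  have h1 : ∑ p, a p * Real.exp (z p)
      = ∑' k : ℕ, ∑ p, a p * (z p ^ k / (Nat.factorial k : ℝ)) := by
    rw [Summable.tsum_finsetSum fun p _ => hsum p]
    refine Finset.sum_congr rfl fun p _ => ?_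
    rw [Real.exp_eq_exp_ℝ, NormedSpace.exp_eq_tsum_div, ← tsum_mul_left]
  rw [h1]
  exact tsum_nonneg h

lemma gauss_pd {n q : ℕ} (x : Fin n → EuclideanSpace ℝ (Fin q)) (v : Fin n → ℝ)
    {s : ℝ} (hs : 0 ≤ s) :
    0 ≤ ∑ i, ∑ j, v i * v j * Real.exp (-(s * ‖x i - x j‖ ^ 2)) := by
  set w : Fin n → ℝ := fun i => v i * Real.exp (-(s * ‖x i‖ ^ 2)) with hw
  set z : Fin n → Fin n → ℝ := fun i j => 2 * s * (inner ℝ (x i) (x j) : ℝ) with hz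
  have hsplit : ∀ i j : Fin n, v i * v j * Real.exp (-(s * ‖x i - x j‖ ^ 2))
      = w i * w j * Real.exp (z i j) := by
    intro i j
    rw [hw, hz]
    simp only []
    rw [norm_sub_sq_real, mul_mul_mul_comm, ← Real.exp_add,
      mul_assoc _ (Real.exp _) (Real.exp _), ← Real.exp_add]
    congr 1
    ring
  simp_rw [hsplit]
  have hmain : 0 ≤ ∑ p : Fin n × Fin n, w p.1 * w p.2 * Real.exp (z p.1 p.2) := by
    refine sum_mul_exp_nonneg (fun p : Fin n × Fin n => w p.1 * w p.2)
      (fun p : Fin n × Fin n => z p.1 p.2) (fun k => ?_)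
    have h2 : ∑ p : Fin n × Fin n, w p.1 * w p.2 * (z p.1 p.2 ^ k / (Nat.factorial k : ℝ))
        = ((2*s) ^ k / (Nat.factorial k : ℝ))
          * ∑ i, ∑ j, w i * w j * (∑ a, x i a * x j a) ^ k := by
      rw [Fintype.sum_prod_type, Finset.mul_sum]
      refine Finset.sum_congr rfl fun i _ => ?_
      rw [Finset.mul_sum]
      refine Finset.sum_congr rfl fun j _ => ?_
      have hinner : (inner ℝ (x i) (x j) : ℝ) = ∑ a, x i a * x j a := by
        simp [PiLp.inner_apply, RCLike.inner_apply, conj_trivial]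
        exact Finset.sum_congr rfl fun a _ => mul_comm _ _
      rw [hz]
      simp only []
      rw [hinner, mul_pow]
      ring
    rw [h2]
    exact mul_nonneg (by positivity) (gram_pow_nonneg _ _ _)
  calc (0:ℝ) ≤ ∑ p : Fin n × Fin n, w p.1 * w p.2 * Real.exp (z p.1 p.2) := hmain
    _ = ∑ i, ∑ j, w i * w j * Real.exp (z i j) := Fintype.sum_prod_type (fun p : Fin n × Fin n => w p.1 * w p.2 * Real.exp (z p.1 p.2))
noncomputable def gker (s : ℝ) : ℝ := (1 - Real.exp (-s)) * s ^ (-(3/2) : ℝ)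

lemma gker_meas : Measurable gker :=
  ((measurable_const.sub (Real.measurable_exp.comp measurable_neg)).mul
    (measurable_id.pow_const _))

lemma gker_nonneg {s : ℝ} (hs : 0 ≤ s) : 0 ≤ gker s := by
  unfold gker
  have h1 : Real.exp (-s) ≤ 1 := Real.exp_le_one_iff.mpr (neg_nonpos.mpr hs)
  have h2 : (0:ℝ) ≤ s ^ (-(3/2) : ℝ) := Real.rpow_nonneg hs _
  nlinarith

lemma gker_integrable : IntegrableOn gker (Ioi 0) := by
  have h0 : IntegrableOn gker (Ioc 0 1) := by
    have hbound : IntegrableOn (fun s : ℝ => s ^ (-(1/2) : ℝ)) (Ioc 0 1) := by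
      rw [integrableOn_Ioc_iff_integrableOn_Ioo]
      exact (intervalIntegral.integrableOn_Ioo_rpow_iff one_pos).mpr (by norm_num)
    refine Integrable.mono' hbound gker_meas.aestronglyMeasurable ?_
    refine (ae_restrict_iff' measurableSet_Ioc).mpr (Filter.Eventually.of_forall fun s hs => ?_)
    rw [Real.norm_eq_abs, abs_of_nonneg (gker_nonneg hs.1.le)]
    unfold gker
    have h1 : 1 - Real.exp (-s) ≤ s := by nlinarith [Real.add_one_le_exp (-s)]
    have h2 : (0:ℝ) ≤ s ^ (-(3/2) : ℝ) := Real.rpow_nonneg hs.1.le _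
    calc (1 - Real.exp (-s)) * s ^ (-(3/2) : ℝ) ≤ s * s ^ (-(3/2) : ℝ) := by nlinarith
      _ = s ^ (-(1/2) : ℝ) := by
          rw [← Real.rpow_one_add' hs.1.le (by norm_num)]
          norm_num
  have h1 : IntegrableOn gker (Ioi 1) := by
    have hbound : IntegrableOn (fun s : ℝ => s ^ (-(3/2) : ℝ)) (Ioi 1) :=
      integrableOn_Ioi_rpow_of_lt (by norm_num) one_pos
    refine Integrable.mono' hbound gker_meas.aestronglyMeasurable ?_
    refine (ae_restrict_iff' measurableSet_Ioi).mpr (Filter.Eventually.of_forall fun s hs => ?_)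
    have hs0 : (0:ℝ) < s := lt_trans one_pos hs
    rw [Real.norm_eq_abs, abs_of_nonneg (gker_nonneg hs0.le)]
    unfold gker
    have h1 : Real.exp (-s) > 0 := Real.exp_pos _
    have h2 : (0:ℝ) ≤ s ^ (-(3/2) : ℝ) := Real.rpow_nonneg hs0.le _
    nlinarith
  have := h0.union h1
  rwa [Ioc_union_Ioi_eq_Ioi one_pos.le] at this

noncomputable def Iconst : ℝ := ∫ s in Ioi (0:ℝ), gker s

lemma Iconst_pos : 0 < Iconst := by
  rw [Iconst]
  refine (setIntegral_pos_iff_support_of_nonneg_ae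
    ((ae_restrict_iff' measurableSet_Ioi).mpr (Filter.Eventually.of_forall
      fun s hs => gker_nonneg (le_of_lt hs))) gker_integrable).mpr ?_
  have : Ioi (0:ℝ) ⊆ Function.support gker ∩ Ioi 0 := by
      intro s hs
      refine ⟨?_, hs⟩
      have hs0 : (0:ℝ) < s := hs
      have h1 : Real.exp (-s) < 1 := Real.exp_lt_one_iff.mpr (by linarith)
      have h2 : (0:ℝ) < s ^ (-(3/2) : ℝ) := Real.rpow_pos_of_pos hs0 _
      unfold Function.support gker
      simp only [mem_setOf_eq]
      exact ne_of_gt (by nlinarith)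
  calc (0:ℝ≥0∞) < volume (Ioi (0:ℝ)) := by simp [Real.volume_Ioi]
    _ ≤ volume (Function.support gker ∩ Ioi 0) := measure_mono this

lemma scaled_integrable {c : ℝ} (hc : 0 ≤ c) :
    IntegrableOn (fun s : ℝ => (1 - Real.exp (-(s * c))) * s ^ (-(3/2) : ℝ)) (Ioi 0) := by
  rcases eq_or_lt_of_le hc with h | h
  · refine MeasureTheory.IntegrableOn.congr_fun (integrableOn_zero) (fun s _ => ?_) measurableSet_Ioi
    simp [← h]
  · have base : IntegrableOn (fun s : ℝ => gker (c * s)) (Ioi 0) := by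
      have h2 := integrableOn_Ioi_comp_mul_left_iff gker (0:ℝ) h
      rw [mul_zero] at h2
      exact h2.mpr gker_integrable
    have : IntegrableOn (fun s : ℝ => c ^ ((3:ℝ)/2) * gker (c * s)) (Ioi 0) := base.const_mul _
    refine MeasureTheory.IntegrableOn.congr_fun this (fun s hs => ?_) measurableSet_Ioi
    have hs0 : (0:ℝ) < s := hs
    unfold gker
    rw [Real.mul_rpow h.le hs0.le, mul_comm s c]
    rw [show c ^ ((3:ℝ)/2) * ((1 - Real.exp (-(c * s))) * (c ^ (-(3/2):ℝ) * s ^ (-(3/2):ℝ)))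
      = (c ^ ((3:ℝ)/2) * c ^ (-(3/2):ℝ)) * ((1 - Real.exp (-(c * s))) * s ^ (-(3/2):ℝ)) by ring]
    rw [← Real.rpow_add h, mul_comm c s]
    norm_num

lemma scaled_integral {c : ℝ} (hc : 0 ≤ c) :
    ∫ s in Ioi (0:ℝ), (1 - Real.exp (-(s * c))) * s ^ (-(3/2) : ℝ) = Real.sqrt c * Iconst := by
  rcases eq_or_lt_of_le hc with h | h
  · rw [← h]
    simp
  · have step1 : ∫ s in Ioi (0:ℝ), (1 - Real.exp (-(s * c))) * s ^ (-(3/2) : ℝ)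
        = ∫ s in Ioi (0:ℝ), c ^ ((3:ℝ)/2) * gker (c * s) := by
      refine setIntegral_congr_fun measurableSet_Ioi (fun s hs => ?_)
      have hs0 : (0:ℝ) < s := hs
      unfold gker
      rw [Real.mul_rpow h.le hs0.le, mul_comm s c]
      rw [show c ^ ((3:ℝ)/2) * ((1 - Real.exp (-(c * s))) * (c ^ (-(3/2):ℝ) * s ^ (-(3/2):ℝ)))
        = (c ^ ((3:ℝ)/2) * c ^ (-(3/2):ℝ)) * ((1 - Real.exp (-(c * s))) * s ^ (-(3/2):ℝ)) by ring]
      rw [← Real.rpow_add h, mul_comm c s]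
      norm_num
    rw [step1, integral_const_mul, integral_comp_mul_left_Ioi gker 0 h, mul_zero]
    rw [smul_eq_mul, ← mul_assoc]
    rw [show c ^ ((3:ℝ)/2) * c⁻¹ = c ^ ((3:ℝ)/2) * c ^ (-1 : ℝ) by rw [Real.rpow_neg_one]]
    rw [← Real.rpow_add h]
    rw [Real.sqrt_eq_rpow, Iconst]
    norm_num

lemma cnd {n q : ℕ} (x : Fin n → EuclideanSpace ℝ (Fin q)) (v : Fin n → ℝ)
    (hv : ∑ i, v i = 0) : ∑ i, ∑ j, v i * v j * ‖x i - x j‖ ≤ 0 := by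
  have hIc := Iconst_pos
  have hint : ∀ p : Fin n × Fin n, IntegrableOn
      (fun s : ℝ => v p.1 * v p.2 * ((1 - Real.exp (-(s * ‖x p.1 - x p.2‖ ^ 2))) * s ^ (-(3/2) : ℝ)))
      (Ioi 0) := fun p => (scaled_integrable (by positivity)).const_mul _
  have key : (∑ i, ∑ j, v i * v j * ‖x i - x j‖) * Iconst ≤ 0 := by
    have h1 : (∑ i, ∑ j, v i * v j * ‖x i - x j‖) * Iconst
        = ∑ p : Fin n × Fin n, ∫ s in Ioi (0:ℝ),
            v p.1 * v p.2 * ((1 - Real.exp (-(s * ‖x p.1 - x p.2‖ ^ 2))) * s ^ (-(3/2) : ℝ)) := by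
      calc (∑ i, ∑ j, v i * v j * ‖x i - x j‖) * Iconst
          = ∑ i, ∑ j, v i * v j * (Real.sqrt (‖x i - x j‖ ^ 2) * Iconst) := by
            rw [Finset.sum_mul]
            refine Finset.sum_congr rfl fun i _ => ?_
            rw [Finset.sum_mul]
            refine Finset.sum_congr rfl fun j _ => ?_
            rw [Real.sqrt_sq (norm_nonneg _)]
            ring
        _ = ∑ i, ∑ j, ∫ s in Ioi (0:ℝ),
              v i * v j * ((1 - Real.exp (-(s * ‖x i - x j‖ ^ 2))) * s ^ (-(3/2) : ℝ)) := by
            refine Finset.sum_congr rfl fun i _ => Finset.sum_congr rfl fun j _ => ?_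
            rw [← scaled_integral (by positivity), ← integral_const_mul]
        _ = ∑ p : Fin n × Fin n, ∫ s in Ioi (0:ℝ),
              v p.1 * v p.2 * ((1 - Real.exp (-(s * ‖x p.1 - x p.2‖ ^ 2))) * s ^ (-(3/2) : ℝ)) :=
            (Fintype.sum_prod_type (fun p : Fin n × Fin n => ∫ s in Ioi (0:ℝ),
              v p.1 * v p.2 * ((1 - Real.exp (-(s * ‖x p.1 - x p.2‖ ^ 2))) * s ^ (-(3/2) : ℝ)))).symm
    rw [h1, ← integral_finset_sum Finset.univ (fun p _ => hint p)]
    refine integral_nonpos_of_ae ((ae_restrict_iff' measurableSet_Ioi).mpr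
      (Filter.Eventually.of_forall fun s hs => ?_))
    have hs0 : (0:ℝ) < s := hs
    have hG := gauss_pd x v hs0.le
    have hsa : (0:ℝ) ≤ s ^ (-(3/2) : ℝ) := Real.rpow_nonneg hs0.le _
    show ∑ p : Fin n × Fin n,
        v p.1 * v p.2 * ((1 - Real.exp (-(s * ‖x p.1 - x p.2‖ ^ 2))) * s ^ (-(3/2) : ℝ)) ≤ 0
    have expand : ∑ p : Fin n × Fin n,
        v p.1 * v p.2 * ((1 - Real.exp (-(s * ‖x p.1 - x p.2‖ ^ 2))) * s ^ (-(3/2) : ℝ))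
        = s ^ (-(3/2) : ℝ) * ((∑ i, v i) ^ 2
            - ∑ i, ∑ j, v i * v j * Real.exp (-(s * ‖x i - x j‖ ^ 2))) := by
      calc ∑ p : Fin n × Fin n,
          v p.1 * v p.2 * ((1 - Real.exp (-(s * ‖x p.1 - x p.2‖ ^ 2))) * s ^ (-(3/2) : ℝ))
          = ∑ i, ∑ j, v i * v j * ((1 - Real.exp (-(s * ‖x i - x j‖ ^ 2))) * s ^ (-(3/2) : ℝ)) :=
            Fintype.sum_prod_type (fun p : Fin n × Fin n =>
              v p.1 * v p.2 * ((1 - Real.exp (-(s * ‖x p.1 - x p.2‖ ^ 2))) * s ^ (-(3/2) : ℝ)))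
        _ = s ^ (-(3/2) : ℝ) * ((∑ i, v i) * (∑ j, v j)
              - ∑ i, ∑ j, v i * v j * Real.exp (-(s * ‖x i - x j‖ ^ 2))) := by
            rw [Finset.sum_mul_sum, ← Finset.sum_sub_distrib, Finset.mul_sum]
            refine Finset.sum_congr rfl fun i _ => ?_
            rw [← Finset.sum_sub_distrib, Finset.mul_sum]
            exact Finset.sum_congr rfl fun j _ => by ring
        _ = _ := by rw [sq]
    rw [expand, hv]
    nlinarith
  nlinarith

noncomputable def Hmat (n : ℕ) : Matrix (Fin n) (Fin n) ℝ := 1 - (n : ℝ)⁻¹ • Matrix.of (fun _ _ => (1 : ℝ))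

lemma Hmat_symm (n : ℕ) : (Hmat n)ᵀ = Hmat n := by
  ext i j
  simp only [Hmat, Matrix.transpose_apply, Matrix.sub_apply, Matrix.smul_apply, Matrix.of_apply,
    Matrix.one_apply, smul_eq_mul, mul_one]
  by_cases h : i = j
  · simp [h]
  · rw [if_neg (fun hji => h hji.symm), if_neg h]

lemma Hmat_colsum {n : ℕ} (j : Fin n) : ∑ k, Hmat n k j = 0 := by
  have hn : (n : ℝ) ≠ 0 := (Nat.cast_pos.mpr j.pos).ne'
  have : ∀ k : Fin n, Hmat n k j = (if k = j then (1:ℝ) else 0) - (n : ℝ)⁻¹ := by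
    intro k
    simp [Hmat, Matrix.sub_apply, Matrix.smul_apply, Matrix.of_apply, Matrix.one_apply]
  simp_rw [this]
  rw [Finset.sum_sub_distrib, Finset.sum_ite_eq' Finset.univ j (fun _ => (1:ℝ))]
  simp [Finset.card_univ, hn]

lemma center_psd {n q : ℕ} (x : Fin n → EuclideanSpace ℝ (Fin q)) :
    Matrix.PosSemidef (-(Hmat n * Matrix.of (fun i j => ‖x i - x j‖) * Hmat n)) := by
  set C : Matrix (Fin n) (Fin n) ℝ := Matrix.of (fun i j => ‖x i - x j‖) with hCdef
  have hC : Cᵀ = C := by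
    ext i j
    simp [hCdef, Matrix.transpose_apply, norm_sub_rev]
  have hsym : (Hmat n * C * Hmat n)ᵀ = Hmat n * C * Hmat n := by
    rw [Matrix.transpose_mul, Matrix.transpose_mul, Hmat_symm, hC, Matrix.mul_assoc]
  refine Matrix.posSemidef_iff_dotProduct_mulVec.mpr ⟨?_, ?_⟩
  · show (-(Hmat n * C * Hmat n))ᴴ = -(Hmat n * C * Hmat n)
    rw [Matrix.conjTranspose_neg,
      show (Hmat n * C * Hmat n)ᴴ = (Hmat n * C * Hmat n)ᵀ from rfl, hsym]
  · intro v
    have hquad : dotProduct (star v) ((-(Hmat n * C * Hmat n)) *ᵥ v)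
        = -dotProduct v ((Hmat n * C * Hmat n) *ᵥ v) := by
      rw [Matrix.neg_mulVec, dotProduct_neg, star_trivial]
    rw [hquad]
    set u : Fin n → ℝ := (Hmat n) *ᵥ v with hu
    have hstep : dotProduct v ((Hmat n * C * Hmat n) *ᵥ v)
        = dotProduct u (C *ᵥ u) := by
      rw [← Matrix.mulVec_mulVec, ← Matrix.mulVec_mulVec, dotProduct_mulVec,
        show Matrix.vecMul v (Hmat n) = u by rw [← Hmat_symm, Matrix.vecMul_transpose]]
    rw [hstep]
    have hu0 : ∑ k, u k = 0 := by
      rw [hu]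
      simp only [Matrix.mulVec, dotProduct]
      rw [Finset.sum_comm]
      simp_rw [← Finset.sum_mul]
      have : ∀ j : Fin n, (∑ k, Hmat n k j) * v j = 0 := fun j => by
        rw [Hmat_colsum j, zero_mul]
      simp_rw [this]
      simp
    have hcnd := cnd x u hu0
    have hexp : dotProduct u (C *ᵥ u) = ∑ i, ∑ j, u i * u j * ‖x i - x j‖ := by
      simp only [dotProduct, Matrix.mulVec, hCdef, Matrix.of_apply, Finset.mul_sum]
      exact Finset.sum_congr rfl fun i _ => Finset.sum_congr rfl fun j _ => by ring
    rw [hexp] at *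
    linarith

lemma sum_entry_mul_nonneg {n : ℕ} {A B : Matrix (Fin n) (Fin n) ℝ}
    (hA : A.PosSemidef) (hB : B.PosSemidef) : 0 ≤ ∑ i, ∑ j, A i j * B i j := by
  open scoped MatrixOrder in
  obtain ⟨M, hM⟩ := CStarAlgebra.nonneg_iff_eq_star_mul_self.mp hB.nonneg
  have hBij : ∀ i j, B i j = ∑ l, M l i * M l j := by
    intro i j
    rw [hM]
    simp [Matrix.mul_apply, Matrix.star_apply, Matrix.conjTranspose_apply, star_trivial]
  calc (0:ℝ) ≤ ∑ l, ∑ i, ∑ j, A i j * (M l i * M l j) := by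
        refine Finset.sum_nonneg fun l _ => ?_
        have h0 := hA.dotProduct_mulVec_nonneg (M l)
        have heq : dotProduct (star (M l)) (A *ᵥ (M l))
            = ∑ i, ∑ j, A i j * (M l i * M l j) := by
          simp only [dotProduct, Matrix.mulVec, Pi.star_apply, star_trivial,
            Finset.mul_sum]
          exact Finset.sum_congr rfl fun i _ => Finset.sum_congr rfl fun j _ => by ring
        rw [heq] at h0
        exact h0
    _ = ∑ i, ∑ l, ∑ j, A i j * (M l i * M l j) := Finset.sum_comm
    _ = ∑ i, ∑ j, ∑ l, A i j * (M l i * M l j) :=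
        Finset.sum_congr rfl fun i _ => Finset.sum_comm
    _ = ∑ i, ∑ j, A i j * B i j := by
        refine Finset.sum_congr rfl fun i _ => Finset.sum_congr rfl fun j _ => ?_
        rw [hBij, Finset.mul_sum]


/-- The sample distance covariance of `U₁,…,Uₙ ∈ ℝ^q` and `X₁,…,Xₙ ∈ ℝ^p`:
with Euclidean distance matrices `C(i,j) = ‖Uᵢ − Uⱼ‖`, `D(i,j) = ‖Xᵢ − Xⱼ‖`, the centering
matrix `H = I − (1/n)J`, and `C̃ = HCH`, `D̃ = HDH`, it is
`dcovₙ(U,X) = (1/n²) Σᵢⱼ C̃(i,j) D̃(i,j)`. -/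
noncomputable def dcov {q p n : ℕ} (U : Fin n → EuclideanSpace ℝ (Fin q))
    (X : Fin n → EuclideanSpace ℝ (Fin p)) : ℝ :=
  let C : Matrix (Fin n) (Fin n) ℝ := Matrix.of fun i j => ‖U i - U j‖
  let D : Matrix (Fin n) (Fin n) ℝ := Matrix.of fun i j => ‖X i - X j‖
  let H : Matrix (Fin n) (Fin n) ℝ := 1 - (n : ℝ)⁻¹ • Matrix.of (fun _ _ => (1 : ℝ))
  ((n : ℝ) ^ 2)⁻¹ * ∑ i, ∑ j, (H * C * H) i j * (H * D * H) i j

/-- For any points `U₁,…,Uₙ ∈ ℝ^q` and `X₁,…,Xₙ ∈ ℝ^p`, the sample distance covariance is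
nonnegative: `dcovₙ(U,X) = (1/n²) Σᵢⱼ C̃(i,j) D̃(i,j) ≥ 0`. -/
theorem dcov_nonneg {q p n : ℕ} (U : Fin n → EuclideanSpace ℝ (Fin q))
    (X : Fin n → EuclideanSpace ℝ (Fin p)) :
    0 ≤ dcov U X := by
  have hA := center_psd U
  have hB := center_psd X
  have hmain : 0 ≤ ∑ i, ∑ j,
      (Hmat n * Matrix.of (fun i j => ‖U i - U j‖) * Hmat n) i j *
      (Hmat n * Matrix.of (fun i j => ‖X i - X j‖) * Hmat n) i j := by
    calc (0:ℝ) ≤ ∑ i, ∑ j,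
          (-(Hmat n * Matrix.of (fun i j => ‖U i - U j‖) * Hmat n)) i j *
          (-(Hmat n * Matrix.of (fun i j => ‖X i - X j‖) * Hmat n)) i j :=
        sum_entry_mul_nonneg hA hB
      _ = ∑ i, ∑ j,
          (Hmat n * Matrix.of (fun i j => ‖U i - U j‖) * Hmat n) i j *
          (Hmat n * Matrix.of (fun i j => ‖X i - X j‖) * Hmat n) i j := by
        refine Finset.sum_congr rfl fun i _ => Finset.sum_congr rfl fun j _ => ?_
        rw [Matrix.neg_apply, Matrix.neg_apply, neg_mul_neg]
  show 0 ≤ ((n : ℝ) ^ 2)⁻¹ * ∑ i, ∑ j,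
      (Hmat n * Matrix.of (fun i j => ‖U i - U j‖) * Hmat n) i j *
      (Hmat n * Matrix.of (fun i j => ‖X i - X j‖) * Hmat n) i j
  exact mul_nonneg (by positivity) hmain
end
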